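/- Let k ≥ 1 with r_n(k) < n, and suppose r̂_k ∈ ℂ^N satisfies p_j^H r̂_k = 0 for all 1 ≤ j ≤ k. Then for any complex parameters ω_1, …, ω_{g_n(k+1)}, the vector r_k := φ_{g_n(k+1)}(A) r̂_k satisfies q_{r_n(k)+1}^H r_k = (Π_{j=1}^{g_n(k+1)} (−ω_j)) · p_{k+1}^H r̂_k. In particular, if ω_j ≠ 0 for all 1 ≤ j ≤ g_n(k+1) and p_{k+1}^H r̂_k ≠ 0, then q_{r_n(k)+1}^H r_k ≠ 0, i.e. r_k is not orthogonal to q_{r_n(k)+1}. -/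

import Mathlib

open Matrix Polynomial

/-- The index function `g_n(k) = ⌊(k-1)/n⌋`, rounding toward minus infinity. -/
def gIdx (n k : ℤ) : ℤ := Int.fdiv (k - 1) n

/-- The index function `r_n(k) = k - n * g_n(k)`. -/
def rIdx (n k : ℤ) : ℤ := k - n * gIdx n k

lemma rIdx_eq (n k : ℤ) (hn : 0 < n) : rIdx n k = (k - 1) % n + 1 := by
  unfold rIdx gIdx
  rw [Int.fdiv_eq_ediv_of_nonneg _ hn.le]
  have h := Int.emod_add_mul_ediv (k - 1) n
  linarith

lemma rIdx_bounds (n k : ℤ) (hn : 0 < n) : 1 ≤ rIdx n k ∧ rIdx n k ≤ n := by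
  rw [rIdx_eq n k hn]
  have h1 := Int.emod_nonneg (k - 1) hn.ne'
  have h2 := Int.emod_lt_of_pos (k - 1) hn
  omega

lemma gIdx_rIdx_key (n m s : ℤ) (hn : 0 < n) (h1 : 1 ≤ s) (h2 : s ≤ n) :
    gIdx n (m * n + s) = m ∧ rIdx n (m * n + s) = s := by
  have hg : gIdx n (m * n + s) = m := by
    unfold gIdx
    rw [Int.fdiv_eq_ediv_of_nonneg _ hn.le]
    have h : m * n + s - 1 = (s - 1) + m * n := by ring
    rw [h, Int.add_mul_ediv_right _ _ hn.ne',
      Int.ediv_eq_zero_of_lt (by omega) (by omega), zero_add]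
  refine ⟨hg, ?_⟩
  unfold rIdx
  rw [hg]; ring

lemma phi_facts (ω : ℕ → ℂ) (φ : ℕ → Polynomial ℂ) (hφ0 : φ 0 = 1)
    (hφ : ∀ m : ℕ, φ (m + 1) = (1 - C (ω (m + 1)) * X) * φ m) (m : ℕ) :
    (φ m).natDegree ≤ m ∧ (φ m).coeff m = ∏ j ∈ Finset.Icc 1 m, (-(ω j)) := by
  induction m with
  | zero => simp [hφ0]
  | succ m ih =>
    obtain ⟨hd, hc⟩ := ih
    have hexp : φ (m + 1) = φ m - C (ω (m + 1)) * (X * φ m) := by rw [hφ]; ring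
    constructor
    · rw [hexp]
      refine (Polynomial.natDegree_sub_le _ _).trans (max_le (by omega) ?_)
      refine (Polynomial.natDegree_mul_le).trans ?_
      have h1 : (C (ω (m + 1))).natDegree = 0 := Polynomial.natDegree_C _
      have h2 : (X * φ m : Polynomial ℂ).natDegree ≤ 1 + m := by
        refine (Polynomial.natDegree_mul_le).trans ?_
        have := Polynomial.natDegree_X_le (R := ℂ)
        omega
      omega
    · rw [hexp]
      rw [Polynomial.coeff_sub, Polynomial.coeff_C_mul, Polynomial.coeff_X_mul,
        Polynomial.coeff_eq_zero_of_natDegree_lt (by omega : (φ m).natDegree < m + 1), hc,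
        Finset.prod_Icc_succ_top (by omega : 1 ≤ m + 1)]
      ring

lemma sum_mulVec' {N : ℕ} {ι : Type*} (s : Finset ι) (M : ι → Matrix (Fin N) (Fin N) ℂ)
    (v : Fin N → ℂ) : (∑ i ∈ s, M i) *ᵥ v = ∑ i ∈ s, (M i *ᵥ v) := by
  classical
  induction s using Finset.induction_on with
  | empty => simp [Matrix.mulVec, dotProduct]
  | insert _ _ h ih => rw [Finset.sum_insert h, Finset.sum_insert h, Matrix.add_mulVec, ih]

lemma dotProduct_sum' {N : ℕ} {ι : Type*} (s : Finset ι) (v : Fin N → ℂ)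
    (w : ι → (Fin N → ℂ)) : v ⬝ᵥ (∑ i ∈ s, w i) = ∑ i ∈ s, v ⬝ᵥ w i := by
  classical
  induction s using Finset.induction_on with
  | empty => simp [dotProduct]
  | insert _ _ h ih => rw [Finset.sum_insert h, Finset.sum_insert h, dotProduct_add, ih]

theorem stmt_11 {N : ℕ} (A : Matrix (Fin N) (Fin N) ℂ) (n : ℤ) (hn : 0 < n)
    (q : ℤ → (Fin N → ℂ)) (p : ℤ → (Fin N → ℂ))
    (hp : ∀ k : ℤ, 1 ≤ k → p k = (Aᴴ ^ (gIdx n k).toNat) *ᵥ q (rIdx n k))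
    (ω : ℕ → ℂ) (φ : ℕ → Polynomial ℂ)
    (hφ0 : φ 0 = 1)
    (hφ : ∀ m : ℕ, φ (m + 1) = (1 - C (ω (m + 1)) * X) * φ m)
    (k : ℤ) (hk : 1 ≤ k) (hkn : rIdx n k < n)
    (rhat : Fin N → ℂ)
    (hv : ∀ j : ℤ, 1 ≤ j → j ≤ k → star (p j) ⬝ᵥ rhat = 0) :
    star (q (rIdx n k + 1)) ⬝ᵥ ((aeval A (φ (gIdx n (k + 1)).toNat)) *ᵥ rhat) =
      (∏ j ∈ Finset.Icc 1 (gIdx n (k + 1)).toNat, (-(ω j))) *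
        (star (p (k + 1)) ⬝ᵥ rhat) ∧
    ((∀ j : ℕ, 1 ≤ j → j ≤ (gIdx n (k + 1)).toNat → ω j ≠ 0) →
      star (p (k + 1)) ⬝ᵥ rhat ≠ 0 →
      star (q (rIdx n k + 1)) ⬝ᵥ ((aeval A (φ (gIdx n (k + 1)).toNat)) *ᵥ rhat) ≠ 0) := by
  set r := rIdx n k with hr
  set g0 := gIdx n k with hg0
  obtain ⟨hr1, -⟩ := rIdx_bounds n k hn
  have hg0nn : 0 ≤ g0 := by
    rw [hg0]
    unfold gIdx
    rw [Int.fdiv_eq_ediv_of_nonneg _ hn.le]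
    exact Int.ediv_nonneg (by omega) hn.le
  have hkeq : k = g0 * n + r := by rw [hr]; unfold rIdx; rw [← hg0]; ring
  have hk1 : gIdx n (k + 1) = g0 ∧ rIdx n (k + 1) = r + 1 := by
    have : k + 1 = g0 * n + (r + 1) := by omega
    rw [this]
    exact gIdx_rIdx_key n g0 (r + 1) hn (by omega) (by omega)
  rw [hk1.1]
  set g : ℕ := g0.toNat with hgdef
  have hg0g : (g : ℤ) = g0 := Int.toNat_of_nonneg hg0nn
  -- orthogonality transported to powers of A
  have hstar : ∀ i : ℕ, star ((Aᴴ ^ i) *ᵥ q (r + 1)) ⬝ᵥ rhat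
      = star (q (r + 1)) ⬝ᵥ ((A ^ i) *ᵥ rhat) := by
    intro i
    rw [Matrix.star_mulVec, ← Matrix.dotProduct_mulVec, Matrix.conjTranspose_pow,
      Matrix.conjTranspose_conjTranspose]
  have hd0 : ∀ i : ℕ, i < g → star (q (r + 1)) ⬝ᵥ ((A ^ i) *ᵥ rhat) = 0 := by
    intro i hi
    have hilt : (i : ℤ) < g0 := by omega
    set j : ℤ := (i : ℤ) * n + (r + 1) with hj
    have hkey := gIdx_rIdx_key n (i : ℤ) (r + 1) hn (by omega) (by omega)
    have hj1 : 1 ≤ j := by nlinarith [Int.natCast_nonneg i]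
    have hjk : j ≤ k := by
      have : ((i : ℤ) + 1) * n ≤ g0 * n :=
        mul_le_mul_of_nonneg_right (by omega) hn.le
      nlinarith
    have hpj := hp j hj1
    rw [hkey.1, hkey.2] at hpj
    have : (↑i : ℤ).toNat = i := by simp
    rw [this] at hpj
    have := hv j hj1 hjk
    rw [hpj, hstar i] at this
    exact this
  have hpk1 : p (k + 1) = (Aᴴ ^ g) *ᵥ q (r + 1) := by
    have := hp (k + 1) (by omega)
    rw [hk1.1, hk1.2] at this
    exact this
  have hdg : star (p (k + 1)) ⬝ᵥ rhat = star (q (r + 1)) ⬝ᵥ ((A ^ g) *ᵥ rhat) := by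
    rw [hpk1, hstar g]
  obtain ⟨hdeg, hcoeff⟩ := phi_facts ω φ hφ0 hφ g
  have hmain : star (q (r + 1)) ⬝ᵥ ((aeval A (φ g)) *ᵥ rhat)
      = (∏ j ∈ Finset.Icc 1 g, (-(ω j))) * (star (p (k + 1)) ⬝ᵥ rhat) := by
    rw [Polynomial.aeval_eq_sum_range' (n := g + 1) (by omega) A, sum_mulVec',
      dotProduct_sum']
    have hterm : ∀ i : ℕ, star (q (r + 1)) ⬝ᵥ (((φ g).coeff i • A ^ i) *ᵥ rhat)
        = (φ g).coeff i * (star (q (r + 1)) ⬝ᵥ ((A ^ i) *ᵥ rhat)) := by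
      intro i
      rw [Matrix.smul_mulVec, dotProduct_smul, smul_eq_mul]
    rw [Finset.sum_congr rfl fun i _ => hterm i, Finset.sum_range_succ,
      Finset.sum_eq_zero fun i hi => by
        rw [hd0 i (Finset.mem_range.mp hi), mul_zero],
      zero_add, hcoeff, hdg]
  refine ⟨hmain, fun hω hne => ?_⟩
  rw [hmain]
  refine mul_ne_zero ?_ hne
  refine Finset.prod_ne_zero_iff.mpr fun j hj => ?_
  simp only [Finset.mem_Icc] at hj
  exact neg_ne_zero.mpr (hω j hj.1 hj.2)
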